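/- Let N be a positive integer, A an N×N complex Hermitian matrix, z ∈ ℂ with Im z > 0, and G = (A − zI)⁻¹. Fix an index k and let G^{(k)} = (π_k(A) − zI)⁻¹. Then for all indices i, j with i ≠ k and j ≠ k, G_{ij} = G^{(k)}_{ij} + G_{ik} G_{kj} / G_{kk} (note G_{kk} ≠ 0 since Im G_{kk} > 0). -/

import Mathlib

open Matrix

open Finset in
lemma aux_det (N : ℕ) (A : Matrix (Fin N) (Fin N) ℂ) (hA : A.IsHermitian)
    (z : ℂ) (hz : z.im ≠ 0) : IsUnit (A - z • (1 : Matrix (Fin N) (Fin N) ℂ)).det := by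
  rw [isUnit_iff_ne_zero]
  intro hdet
  obtain ⟨v, hv, hmv⟩ := Matrix.exists_mulVec_eq_zero_iff.mpr hdet
  have hAv : A *ᵥ v = z • v := by
    rwa [sub_mulVec, smul_mulVec, one_mulVec, sub_eq_zero] at hmv
  set r : ℂ := star v ⬝ᵥ v with hrdef
  have hr : r = (∑ i, (Complex.normSq (v i) : ℂ)) := by
    simp [hrdef, dotProduct, Complex.normSq_eq_conj_mul_self, Complex.star_def]
  have hrim : r.im = 0 := by
    rw [hr]; simp [Complex.im_sum]
  have hrre : 0 < r.re := by
    rw [hr]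
    simp only [Complex.re_sum, Complex.ofReal_re]
    obtain ⟨i, hi⟩ := Function.ne_iff.mp hv
    exact Finset.sum_pos' (fun j _ => Complex.normSq_nonneg _)
      ⟨i, Finset.mem_univ i, Complex.normSq_pos.mpr hi⟩
  set c : ℂ := star v ⬝ᵥ (A *ᵥ v) with hcdef
  have hc1 : c = z * r := by
    rw [hcdef, hAv, dotProduct_smul]; rfl
  have key : star v ⬝ᵥ (A *ᵥ v) = star (star (A *ᵥ v) ⬝ᵥ v) := star_dotProduct _ _
  have key2 : star (A *ᵥ v) ⬝ᵥ v = star v ⬝ᵥ (A *ᵥ v) := by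
    rw [star_mulVec, hA.eq, ← dotProduct_mulVec]
  have hc2 : star c = c := by
    show star (star v ⬝ᵥ (A *ᵥ v)) = star v ⬝ᵥ (A *ᵥ v)
    conv_lhs => rw [key]
    rw [star_star]
    exact key2
  have him : c.im = 0 := by
    have := congrArg Complex.im hc2
    simp [Complex.star_def] at this
    linarith
  rw [hc1] at him
  simp [Complex.mul_im, hrim] at him
  rcases him with h | h
  · exact hz h
  · linarith

/-- With `G = (A − zI)⁻¹` and `G⁽ᵏ⁾ = (π_k(A) − zI)⁻¹`, where `π_k(A)`
zeroes the `k`-th row and column of `A`, one has `G_{kk} ≠ 0` and, for all `i ≠ k`, `j ≠ k`,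
`G_{ij} = G⁽ᵏ⁾_{ij} + G_{ik} G_{kj} / G_{kk}`. -/
theorem stmt_10 (N : ℕ) (hN : 0 < N) (A : Matrix (Fin N) (Fin N) ℂ)
    (hA : A.IsHermitian) (z : ℂ) (hz : 0 < z.im) (k : Fin N) :
    let G := (A - z • (1 : Matrix (Fin N) (Fin N) ℂ))⁻¹
    let Ak : Matrix (Fin N) (Fin N) ℂ := fun x y => if x = k ∨ y = k then 0 else A x y
    let Gk := (Ak - z • (1 : Matrix (Fin N) (Fin N) ℂ))⁻¹
    G k k ≠ 0 ∧
      ∀ i j : Fin N, i ≠ k → j ≠ k → G i j = Gk i j + G i k * G k j / G k k := by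
  intro G Ak Gk
  have hzim : z.im ≠ 0 := ne_of_gt hz
  have hz0 : z ≠ 0 := fun h => hzim (by rw [h]; rfl)
  set B : Matrix (Fin N) (Fin N) ℂ := A - z • 1 with hB
  have hdet : IsUnit B.det := aux_det N A hA z hzim
  have hGdef : G = B⁻¹ := rfl
  have hBG : B * G = 1 := by rw [hGdef]; exact mul_nonsing_inv B hdet
  have hGB : G * B = 1 := by rw [hGdef]; exact nonsing_inv_mul B hdet
  have hBH : Bᴴ = A - (starRingEnd ℂ) z • 1 := by
    rw [hB, conjTranspose_sub, hA.eq, conjTranspose_smul, conjTranspose_one]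
    rfl
  have hdetH : IsUnit Bᴴ.det := by
    rw [hBH]
    exact aux_det N A hA _ (by simp [hzim])
  have hGH : Gᴴ = Bᴴ⁻¹ := by rw [hGdef, conjTranspose_nonsing_inv]
  have h1 : Bᴴ * Gᴴ = 1 := by rw [hGH]; exact mul_nonsing_inv _ hdetH
  have hBHB : Bᴴ - B = (z - (starRingEnd ℂ) z) • (1 : Matrix (Fin N) (Fin N) ℂ) := by
    rw [hBH, hB]
    module
  have e : G * (Bᴴ * Gᴴ) - (G * B) * Gᴴ = G - Gᴴ := by
    rw [h1, mul_one, hGB, one_mul]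
  have e2 : G * (Bᴴ * Gᴴ) - (G * B) * Gᴴ = (z - (starRingEnd ℂ) z) • (G * Gᴴ) := by
    rw [← mul_assoc, ← sub_mul, ← mul_sub, hBHB, mul_smul_comm, mul_one, smul_mul_assoc]
  have key : G - Gᴴ = (z - (starRingEnd ℂ) z) • (G * Gᴴ) := by rw [← e]; exact e2
  have ent : G k k - (starRingEnd ℂ) (G k k)
      = (z - (starRingEnd ℂ) z) * (∑ x, (Complex.normSq (G k x) : ℂ)) := by
    have h := congrFun (congrFun key k) k
    simp only [Matrix.sub_apply, conjTranspose_apply, Matrix.smul_apply, smul_eq_mul, mul_apply,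
      Complex.star_def] at h
    rw [h]
    congr 1
    apply Finset.sum_congr rfl
    intro x _
    rw [Complex.mul_conj]
  have hrow : ∃ x, G k x ≠ 0 := by
    by_contra hall
    push_neg at hall
    have h := congrFun (congrFun hGB k) k
    rw [mul_apply, one_apply_eq] at h
    simp [hall] at h
  set S : ℝ := ∑ x, Complex.normSq (G k x) with hS
  have hSpos : 0 < S := by
    obtain ⟨x, hx⟩ := hrow
    exact Finset.sum_pos' (fun j _ => Complex.normSq_nonneg _)
      ⟨x, Finset.mem_univ x, Complex.normSq_pos.mpr hx⟩
  have hsum : (∑ x, (Complex.normSq (G k x) : ℂ)) = (S : ℂ) := by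
    rw [hS]; push_cast; rfl
  rw [hsum] at ent
  have him : (G k k).im = z.im * S := by
    have h := congrArg Complex.im ent
    simp only [Complex.sub_im, Complex.conj_im, Complex.mul_im, Complex.sub_re,
      Complex.conj_re, Complex.ofReal_im, Complex.ofReal_re] at h
    linarith
  have hGkk : G k k ≠ 0 := by
    intro h0
    rw [h0] at him
    simp only [Complex.zero_im] at him
    nlinarith
  refine ⟨hGkk, ?_⟩
  -- right inverse for Ak - z•1
  set C : Matrix (Fin N) (Fin N) ℂ := fun x y =>
    if x = k then (if y = k then -z⁻¹ else 0)
    else (if y = k then 0 else G x y - G x k * G k y / G k k) with hC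
  have hsplit : ∀ f : Fin N → ℂ, (∑ x, if x = k then 0 else f x) = (∑ x, f x) - f k := by
    intro f
    have h1 : (∑ x, f x) = f k + ∑ x ∈ Finset.univ.erase k, f x :=
      (Finset.add_sum_erase _ f (Finset.mem_univ k)).symm
    have h2 : (∑ x, if x = k then 0 else f x)
        = (if k = k then 0 else f k) + ∑ x ∈ Finset.univ.erase k, (if x = k then 0 else f x) :=
      (Finset.add_sum_erase _ _ (Finset.mem_univ k)).symm
    rw [h2, if_pos rfl, zero_add, h1,
      Finset.sum_congr rfl (fun x hx => if_neg (Finset.mem_erase.1 hx).1)]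
    ring
  have hBGe : ∀ i j, (∑ x, B i x * G x j) = if i = j then 1 else 0 := by
    intro i j
    have h := congrFun (congrFun hBG i) j
    rwa [mul_apply, one_apply] at h
  have hmain : (Ak - z • (1 : Matrix (Fin N) (Fin N) ℂ)) * C = 1 := by
    ext i j
    rw [mul_apply, one_apply]
    by_cases hik : i = k
    · subst hik
      have hterm : ∀ x, (Ak - z • (1 : Matrix (Fin N) (Fin N) ℂ)) i x * C x j
          = if x = i then -z * C i j else 0 := by
        intro x
        simp only [Matrix.sub_apply, Matrix.smul_apply, smul_eq_mul, one_apply]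
        simp only [Matrix.sub_apply, Matrix.smul_apply, smul_eq_mul, one_apply, hC, Ak]
        by_cases hx : x = i
        · subst hx; simp
        · simp [Ne.symm hx, hx]
      rw [Finset.sum_congr rfl (fun x _ => hterm x), Finset.sum_ite_eq' Finset.univ i _]
      simp only [Finset.mem_univ, if_true, hC]
      by_cases hj : j = i
      · subst hj; simp [hz0, neg_mul, mul_inv_cancel₀]
      · simp [hj, Ne.symm hj]
    · by_cases hjk : j = k
      · subst hjk
        have hterm : ∀ x, (Ak - z • (1 : Matrix (Fin N) (Fin N) ℂ)) i x * C x j = 0 := by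
          intro x
          simp only [Matrix.sub_apply, Matrix.smul_apply, smul_eq_mul, one_apply]
          simp only [Matrix.sub_apply, Matrix.smul_apply, smul_eq_mul, one_apply, hC, Ak]
          by_cases hx : x = j
          · subst hx; simp [hik]
          · simp [hx]
        rw [Finset.sum_congr rfl (fun x _ => hterm x)]
        simp [hik]
      · have hterm : ∀ x, (Ak - z • (1 : Matrix (Fin N) (Fin N) ℂ)) i x * C x j
            = if x = k then 0 else B i x * (G x j - G x k * G k j / G k k) := by
          intro x
          by_cases hx : x = k
          · subst hx
            simp [hC, Ak, hik, hjk, Matrix.sub_apply, Matrix.smul_apply, one_apply, Ne.symm hik]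
          · simp only [Matrix.sub_apply, Matrix.smul_apply, smul_eq_mul, one_apply]
            simp only [Matrix.sub_apply, Matrix.smul_apply, smul_eq_mul, one_apply, hC, Ak, hB,
              hx, hik, hjk, if_false, or_self, if_neg (by tauto : ¬(i = k ∨ x = k))]
        rw [Finset.sum_congr rfl (fun x _ => hterm x), hsplit]
        have expand : (∑ x, B i x * (G x j - G x k * G k j / G k k))
            = (∑ x, B i x * G x j) - (∑ x, B i x * G x k) * (G k j / G k k) := by
          rw [Finset.sum_mul, ← Finset.sum_sub_distrib]
          apply Finset.sum_congr rfl
          intro x _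
          ring
        rw [expand, hBGe i j, hBGe i k, if_neg hik]
        have hcancel : G k j - G k k * G k j / G k k = 0 := by
          rw [mul_div_assoc]; field_simp; ring
        rw [hcancel]
        ring
  have hGkC : Gk = C := inv_eq_right_inv hmain
  intro i j hij hjk
  rw [hGkC, hC]
  simp only [hij, hjk, if_false, if_neg hij, if_neg hjk]
  ring
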